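/- (Equivalence of the leap-frog discrete energy) Let N be an even positive integer, 𝒯_N = {−N/2,…,N/2−1}, μ_l = 2πl/(b−a), h = (b−a)/N, and τ > 0 with 2τπ/h ≤ 1 (equivalently 2τ·max_{l∈𝒯_N}|μ_l| ≤ 1, noting max_{l∈𝒯_N}|μ_l| = π/h). For families (η̂_l)_{l∈𝒯_N} and (ζ̂_l)_{l∈𝒯_N} of vectors in ℂ², set ‖η‖² = (b−a) ∑_{l∈𝒯_N} |η̂_l|², ‖ζ‖² = (b−a) ∑_{l∈𝒯_N} |ζ̂_l|², and define the energy ℰ = ‖η‖² + ‖ζ‖² − 2τ(b−a)·Im( ∑_{l∈𝒯_N} μ_l (η̂_l)* σ₁ ζ̂_l ). Then (1/2)(‖η‖² + ‖ζ‖²) ≤ ℰ ≤ (3/2)(‖η‖² + ‖ζ‖²). -/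

import Mathlib

open Complex Matrix Finset

noncomputable section

/-- The Pauli matrix σ₁. -/
def σ1 : Matrix (Fin 2) (Fin 2) ℂ := !![0, 1; 1, 0]

/-- The index set 𝒯_N = {−N/2, …, N/2−1}. -/
def TN (N : ℕ) : Finset ℤ := Finset.Icc (-(N : ℤ) / 2) ((N : ℤ) / 2 - 1)

/-- The Fourier frequency μ_l = 2πl/(b−a); `bma` stands for b−a. -/
def μ (bma : ℝ) (l : ℤ) : ℝ := 2 * Real.pi * l / bma

/-- The squared norm ‖η‖² = (b−a)∑_{l∈𝒯_N}|η̂_l|² of a family of Fourier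
coefficients. -/
def fnsq (a b : ℝ) (N : ℕ) (η : ℤ → Fin 2 → ℂ) : ℝ :=
  (b - a) * ∑ l ∈ TN N, ∑ i, ‖η l i‖ ^ 2

/-- Equivalence of the leap-frog discrete energy:
under the CFL-type condition 2τπ/h ≤ 1, the energy
ℰ = ‖η‖² + ‖ζ‖² − 2τ(b−a)Im(∑_{l∈𝒯_N} μ_l η̂_l* σ₁ ζ̂_l)
satisfies (1/2)(‖η‖² + ‖ζ‖²) ≤ ℰ ≤ (3/2)(‖η‖² + ‖ζ‖²). -/
theorem leapfrog_energy_equivalence (a b : ℝ) (hab : a < b) (N : ℕ) (hN : 0 < N)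
    (hNe : Even N) (h τ : ℝ) (hh : h = (b - a) / N) (hτ : 0 < τ)
    (hcfl : 2 * τ * Real.pi / h ≤ 1)
    (η ζ : ℤ → Fin 2 → ℂ) :
    (1 / 2) * (fnsq a b N η + fnsq a b N ζ) ≤
        fnsq a b N η + fnsq a b N ζ -
          2 * τ * (b - a) *
            (∑ l ∈ TN N, ((μ (b - a) l : ℝ) : ℂ) * (star (η l) ⬝ᵥ σ1.mulVec (ζ l))).im ∧
      fnsq a b N η + fnsq a b N ζ -
          2 * τ * (b - a) *
            (∑ l ∈ TN N, ((μ (b - a) l : ℝ) : ℂ) * (star (η l) ⬝ᵥ σ1.mulVec (ζ l))).im ≤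
        (3 / 2) * (fnsq a b N η + fnsq a b N ζ) := by
  have hba : (0:ℝ) < b - a := sub_pos.2 hab
  have hNR : (0:ℝ) < (N:ℝ) := by exact_mod_cast hN
  have hhp : 0 < h := by rw [hh]; positivity
  -- CFL condition rewritten
  have hcfl' : 2 * τ * Real.pi * (N:ℝ) / (b - a) ≤ 1 := by
    have : 2 * τ * Real.pi / h = 2 * τ * Real.pi * (N:ℝ) / (b - a) := by
      rw [hh]; field_simp
    linarith [this ▸ hcfl]
  -- |l| ≤ N/2 for l ∈ TN
  have hlb : ∀ l ∈ TN N, |(l:ℝ)| ≤ (N:ℝ)/2 := by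
    intro l hl
    obtain ⟨k, hk⟩ := hNe
    have hNk : (N:ℤ) = 2 * k := by push_cast [hk]; ring
    simp only [TN, Finset.mem_Icc] at hl
    have h1 : -(k:ℤ) ≤ l := by omega
    have h2 : l ≤ (k:ℤ) := by omega
    rw [abs_le]
    constructor
    · have : -((k:ℝ)) ≤ (l:ℝ) := by exact_mod_cast h1
      have hk2 : (N:ℝ)/2 = (k:ℝ) := by
        have : (N:ℝ) = 2*k := by exact_mod_cast hNk
        linarith
      linarith
    · have : (l:ℝ) ≤ (k:ℝ) := by exact_mod_cast h2
      have hk2 : (N:ℝ)/2 = (k:ℝ) := by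
        have : (N:ℝ) = 2*k := by exact_mod_cast hNk
        linarith
      linarith
  -- 2τ|μ_l| ≤ 1
  have hμb : ∀ l ∈ TN N, 2 * τ * |μ (b-a) l| ≤ 1 := by
    intro l hl
    have habs : |μ (b-a) l| = 2 * Real.pi * |(l:ℝ)| / (b - a) := by
      unfold μ
      rw [abs_div, abs_mul, abs_of_pos hba]
      have : |2 * Real.pi| = 2 * Real.pi := abs_of_pos (by positivity)
      rw [this]
    rw [habs]
    have h1 := hlb l hl
    have hπ := Real.pi_pos
    calc 2 * τ * (2 * Real.pi * |(l:ℝ)| / (b - a))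
        ≤ 2 * τ * (2 * Real.pi * ((N:ℝ)/2) / (b - a)) := by
          gcongr
      _ = 2 * τ * Real.pi * (N:ℝ) / (b - a) := by ring
      _ ≤ 1 := hcfl'
  -- per-term bound
  have hterm : ∀ l ∈ TN N,
      2 * τ * |(((μ (b-a) l : ℝ) : ℂ) * (star (η l) ⬝ᵥ σ1.mulVec (ζ l))).im| ≤
        ((∑ i, ‖η l i‖ ^ 2) + ∑ i, ‖ζ l i‖ ^ 2) / 2 := by
    intro l hl
    have hw : star (η l) ⬝ᵥ σ1.mulVec (ζ l) =
        (starRingEnd ℂ) (η l 0) * ζ l 1 + (starRingEnd ℂ) (η l 1) * ζ l 0 := by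
      simp [σ1, dotProduct, Matrix.mulVec, Fin.sum_univ_two, Pi.star_apply]
    have hnw : ‖star (η l) ⬝ᵥ σ1.mulVec (ζ l)‖ ≤
        ‖η l 0‖ * ‖ζ l 1‖ + ‖η l 1‖ * ‖ζ l 0‖ := by
      rw [hw]
      calc ‖(starRingEnd ℂ) (η l 0) * ζ l 1 + (starRingEnd ℂ) (η l 1) * ζ l 0‖
          ≤ ‖(starRingEnd ℂ) (η l 0) * ζ l 1‖ + ‖(starRingEnd ℂ) (η l 1) * ζ l 0‖ :=
            norm_add_le _ _
        _ = ‖η l 0‖ * ‖ζ l 1‖ + ‖η l 1‖ * ‖ζ l 0‖ := by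
            simp [norm_mul]
    have him : |(((μ (b-a) l : ℝ) : ℂ) * (star (η l) ⬝ᵥ σ1.mulVec (ζ l))).im| ≤
        |μ (b-a) l| * ‖star (η l) ⬝ᵥ σ1.mulVec (ζ l)‖ := by
      calc |(((μ (b-a) l : ℝ) : ℂ) * (star (η l) ⬝ᵥ σ1.mulVec (ζ l))).im|
          ≤ ‖((μ (b-a) l : ℝ) : ℂ) * (star (η l) ⬝ᵥ σ1.mulVec (ζ l))‖ :=
            Complex.abs_im_le_norm _
        _ = |μ (b-a) l| * ‖star (η l) ⬝ᵥ σ1.mulVec (ζ l)‖ := by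
            rw [norm_mul, Complex.norm_real, Real.norm_eq_abs]
    have hsq : ∑ i, ‖η l i‖ ^ 2 = ‖η l 0‖^2 + ‖η l 1‖^2 := Fin.sum_univ_two _
    have hsq' : ∑ i, ‖ζ l i‖ ^ 2 = ‖ζ l 0‖^2 + ‖ζ l 1‖^2 := Fin.sum_univ_two _
    rw [hsq, hsq']
    have hμl := hμb l hl
    have hnn : (0:ℝ) ≤ ‖star (η l) ⬝ᵥ σ1.mulVec (ζ l)‖ := norm_nonneg _
    have key : 2 * τ * (|μ (b-a) l| * ‖star (η l) ⬝ᵥ σ1.mulVec (ζ l)‖) ≤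
        ‖star (η l) ⬝ᵥ σ1.mulVec (ζ l)‖ := by
      calc 2 * τ * (|μ (b-a) l| * ‖star (η l) ⬝ᵥ σ1.mulVec (ζ l)‖)
          = (2 * τ * |μ (b-a) l|) * ‖star (η l) ⬝ᵥ σ1.mulVec (ζ l)‖ := by ring
        _ ≤ 1 * ‖star (η l) ⬝ᵥ σ1.mulVec (ζ l)‖ := mul_le_mul_of_nonneg_right hμl hnn
        _ = _ := one_mul _
    have hprod : ‖η l 0‖ * ‖ζ l 1‖ + ‖η l 1‖ * ‖ζ l 0‖ ≤
        ((‖η l 0‖^2 + ‖η l 1‖^2) + (‖ζ l 0‖^2 + ‖ζ l 1‖^2)) / 2 := by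
      nlinarith [sq_nonneg (‖η l 0‖ - ‖ζ l 1‖), sq_nonneg (‖η l 1‖ - ‖ζ l 0‖)]
    nlinarith [him, mul_le_mul_of_nonneg_left him (le_of_lt (by positivity : (0:ℝ) < 2*τ))]
  -- global bound
  set E := (∑ l ∈ TN N, ((μ (b - a) l : ℝ) : ℂ) * (star (η l) ⬝ᵥ σ1.mulVec (ζ l))).im with hE
  have hEsum : E = ∑ l ∈ TN N,
      (((μ (b - a) l : ℝ) : ℂ) * (star (η l) ⬝ᵥ σ1.mulVec (ζ l))).im := by
    rw [hE, Complex.im_sum]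
  have hmain : 2 * τ * (b - a) * |E| ≤ (1/2) * (fnsq a b N η + fnsq a b N ζ) := by
    have habsE : |E| ≤ ∑ l ∈ TN N,
        |(((μ (b - a) l : ℝ) : ℂ) * (star (η l) ⬝ᵥ σ1.mulVec (ζ l))).im| := by
      rw [hEsum]; exact Finset.abs_sum_le_sum_abs _ _
    have h2τ : 2 * τ * |E| ≤ ∑ l ∈ TN N,
        ((∑ i, ‖η l i‖ ^ 2) + ∑ i, ‖ζ l i‖ ^ 2) / 2 := by
      calc 2 * τ * |E| ≤ 2 * τ * ∑ l ∈ TN N,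
            |(((μ (b - a) l : ℝ) : ℂ) * (star (η l) ⬝ᵥ σ1.mulVec (ζ l))).im| :=
            mul_le_mul_of_nonneg_left habsE (by positivity)
        _ = ∑ l ∈ TN N, 2 * τ *
            |(((μ (b - a) l : ℝ) : ℂ) * (star (η l) ⬝ᵥ σ1.mulVec (ζ l))).im| := by
            rw [Finset.mul_sum]
        _ ≤ ∑ l ∈ TN N, ((∑ i, ‖η l i‖ ^ 2) + ∑ i, ‖ζ l i‖ ^ 2) / 2 :=
            Finset.sum_le_sum hterm
    have hsplit : ∑ l ∈ TN N, ((∑ i, ‖η l i‖ ^ 2) + ∑ i, ‖ζ l i‖ ^ 2) / 2 =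
        (1/2) * ((∑ l ∈ TN N, ∑ i, ‖η l i‖ ^ 2) + ∑ l ∈ TN N, ∑ i, ‖ζ l i‖ ^ 2) := by
      rw [← Finset.sum_add_distrib]
      rw [Finset.mul_sum]
      apply Finset.sum_congr rfl
      intro l _; ring
    rw [hsplit] at h2τ
    have : 2 * τ * (b - a) * |E| = (b - a) * (2 * τ * |E|) := by ring
    rw [this]
    unfold fnsq
    calc (b - a) * (2 * τ * |E|)
        ≤ (b - a) * ((1/2) * ((∑ l ∈ TN N, ∑ i, ‖η l i‖ ^ 2) +
            ∑ l ∈ TN N, ∑ i, ‖ζ l i‖ ^ 2)) :=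
          mul_le_mul_of_nonneg_left h2τ (le_of_lt hba)
      _ = (1/2) * ((b - a) * (∑ l ∈ TN N, ∑ i, ‖η l i‖ ^ 2) +
            (b - a) * ∑ l ∈ TN N, ∑ i, ‖ζ l i‖ ^ 2) := by ring
  have habs : |2 * τ * (b - a) * E| ≤ (1/2) * (fnsq a b N η + fnsq a b N ζ) := by
    rw [abs_mul, abs_of_pos (by positivity : (0:ℝ) < 2 * τ * (b - a))]
    exact hmain
  rw [abs_le] at habs
  constructor <;> linarith [habs.1, habs.2]

end
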